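/- Under the same hypotheses ($b_n \le b_{n+1} < 0$, $x - b_n = 2\cosh(\gamma_n) \ge 2$ for $n \le N$, $\psi$ defined by the recursion $\psi_{-1}=0$, $\psi_0=1$, $\psi_{n+1} = (1+e^{-2\gamma_{n+1}})\psi_n - e^{-(\gamma_n+\gamma_{n+1})}\psi_{n-1}$), one has $\psi_{n+1} \le 1 + \psi_n$ for $0 \le n \le N-2$, and consequently $\psi_n \le n+1$ for $0 \le n \le N-1$. -/
import Mathlib

theorem stmt_2 (b γ ψ : ℤ → ℝ) (N : ℤ) (x : ℝ)
    (hb : ∀ n : ℤ, b n ≤ b (n + 1)) (hbneg : ∀ n : ℤ, b n < 0)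
    (hx : 0 < x ∧ x < 2)
    (hforb : ∀ n ≤ N, 2 ≤ x - b n)
    (hγ : ∀ n ≤ N, 0 ≤ γ n ∧ x - b n = 2 * Real.cosh (γ n))
    (hψm1 : ψ (-1) = 0) (hψ0 : ψ 0 = 1)
    (hrec : ∀ n : ℤ, 0 ≤ n → n < N →
      ψ (n + 1) = (1 + Real.exp (-2 * γ (n + 1))) * ψ n
        - Real.exp (-(γ n + γ (n + 1))) * ψ (n - 1)) :
    (∀ n : ℤ, 0 ≤ n → n ≤ N - 2 → ψ (n + 1) ≤ 1 + ψ n) ∧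
    (∀ n : ℤ, 0 ≤ n → n ≤ N - 1 → ψ n ≤ n + 1) := by
  -- monotonicity of γ
  have hmono : ∀ n : ℤ, n + 1 ≤ N → γ (n + 1) ≤ γ n := by
    intro n hn
    obtain ⟨h0, he0⟩ := hγ n (by omega)
    obtain ⟨h1, he1⟩ := hγ (n + 1) hn
    have hcosh : Real.cosh (γ (n + 1)) ≤ Real.cosh (γ n) := by
      have := hb n; nlinarith
    have := Real.cosh_le_cosh.mp hcosh
    rwa [abs_of_nonneg h1, abs_of_nonneg h0] at this
  -- key invariant
  have key : ∀ k : ℕ, (k : ℤ) ≤ N - 1 →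
      0 ≤ ψ ((k : ℤ) - 1) ∧ ψ ((k : ℤ) - 1) ≤ ψ (k : ℤ) ∧
      Real.exp (γ ((k : ℤ) + 1)) * ψ (k : ℤ) - Real.exp (-γ (k : ℤ)) * ψ ((k : ℤ) - 1)
        ≤ Real.exp (γ ((k : ℤ) + 1)) := by
    intro k
    induction k with
    | zero =>
      intro _
      norm_num [hψm1, hψ0]
    | succ k ih =>
      intro hk
      have hk' : (k : ℤ) ≤ N - 1 := by push_cast at hk ⊢; omega
      obtain ⟨ih0, ih1, ih2⟩ := ih hk'
      have hkN : (k : ℤ) < N := by omega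
      have hrk := hrec k (by positivity) hkN
      have hg1 : 0 ≤ γ ((k : ℤ) + 1) := (hγ _ (by omega)).1
      have hg0 : 0 ≤ γ (k : ℤ) := (hγ _ (by omega)).1
      have hm1 : γ ((k : ℤ) + 1) ≤ γ (k : ℤ) := hmono _ (by omega)
      have hm2 : γ ((k : ℤ) + 2) ≤ γ ((k : ℤ) + 1) := by
        have h := hmono ((k : ℤ) + 1) (by push_cast at hk ⊢; omega)
        rwa [show ((k:ℤ)+1)+1 = (k:ℤ)+2 from by ring] at h
      have hψk : 0 ≤ ψ (k : ℤ) := le_trans ih0 ih1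
      have e1 : Real.exp (-2 * γ ((k : ℤ) + 1))
          = Real.exp (-γ ((k : ℤ) + 1)) * Real.exp (-γ ((k : ℤ) + 1)) := by
        rw [← Real.exp_add]; ring_nf
      have e2 : Real.exp (-(γ (k : ℤ) + γ ((k : ℤ) + 1)))
          = Real.exp (-γ ((k : ℤ) + 1)) * Real.exp (-γ (k : ℤ)) := by
        rw [← Real.exp_add]; ring_nf
      have hle1 : Real.exp (-γ (k : ℤ)) ≤ Real.exp (-γ ((k : ℤ) + 1)) :=
        Real.exp_le_exp.mpr (by linarith)
      have hle2 : Real.exp (-γ ((k : ℤ) + 1)) ≤ 1 := Real.exp_le_one_iff.mpr (by linarith)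
      have hpos : (0 : ℝ) < Real.exp (-γ ((k : ℤ) + 1)) := Real.exp_pos _
      have hinv : Real.exp (-γ ((k:ℤ)+1)) * Real.exp (γ ((k:ℤ)+1)) = 1 := by
        rw [← Real.exp_add]; simp
      have hstep : ψ (k : ℤ) ≤ ψ ((k : ℤ) + 1) := by
        rw [hrk, e1, e2]
        have h1 : Real.exp (-γ (k : ℤ)) * ψ ((k:ℤ) - 1)
            ≤ Real.exp (-γ (k : ℤ)) * ψ (k : ℤ) :=
          mul_le_mul_of_nonneg_left ih1 (le_of_lt (Real.exp_pos _))
        nlinarith [mul_le_mul_of_nonneg_right hle1 hψk]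
      have hψk1 : ψ ((k : ℤ) + 1) = Real.exp (-2 * γ ((k : ℤ) + 1)) * ψ (k : ℤ)
          + Real.exp (-γ ((k : ℤ) + 1)) *
            (Real.exp (γ ((k : ℤ) + 1)) * ψ (k : ℤ)
              - Real.exp (-γ (k : ℤ)) * ψ ((k : ℤ) - 1)) := by
        rw [hrk, e1, e2]
        linear_combination (-ψ (k:ℤ)) * hinv
      have hc : Real.exp (γ ((k:ℤ)+2)) = Real.exp (γ ((k:ℤ)+2) - γ ((k:ℤ)+1))
          * Real.exp (γ ((k:ℤ)+1)) := by rw [← Real.exp_add]; ring_nf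
      have hc1 : Real.exp (γ ((k:ℤ)+2) - γ ((k:ℤ)+1)) ≤ 1 :=
        Real.exp_le_one_iff.mpr (by linarith)
      have hc0 : (0:ℝ) < Real.exp (γ ((k:ℤ)+2) - γ ((k:ℤ)+1)) := Real.exp_pos _
      have hWrec : Real.exp (γ ((k:ℤ)+2)) * ψ ((k:ℤ)+1)
          - Real.exp (-γ ((k:ℤ)+1)) * ψ (k : ℤ)
          = Real.exp (γ ((k:ℤ)+2) - γ ((k:ℤ)+1)) *
              (Real.exp (γ ((k : ℤ) + 1)) * ψ (k : ℤ)
                - Real.exp (-γ (k : ℤ)) * ψ ((k : ℤ) - 1))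
            + (Real.exp (γ ((k:ℤ)+2) - γ ((k:ℤ)+1)) - 1) *
              (Real.exp (-γ ((k:ℤ)+1)) * ψ (k : ℤ)) := by
        rw [hψk1, hc, e1]
        linear_combination (Real.exp (γ ((k:ℤ)+2) - γ ((k:ℤ)+1)) *
          (Real.exp (-γ ((k:ℤ)+1)) * ψ (k:ℤ) + Real.exp (γ ((k : ℤ) + 1)) * ψ (k : ℤ)
                - Real.exp (-γ (k : ℤ)) * ψ ((k : ℤ) - 1))) * hinv
      have hcW : Real.exp (γ ((k:ℤ)+2) - γ ((k:ℤ)+1)) *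
              (Real.exp (γ ((k : ℤ) + 1)) * ψ (k : ℤ)
                - Real.exp (-γ (k : ℤ)) * ψ ((k : ℤ) - 1))
            ≤ Real.exp (γ ((k:ℤ)+2)) := by
        rcases le_or_gt (Real.exp (γ ((k : ℤ) + 1)) * ψ (k : ℤ)
                - Real.exp (-γ (k : ℤ)) * ψ ((k : ℤ) - 1)) 0 with h | h
        · nlinarith [Real.exp_pos (γ ((k:ℤ)+2))]
        · calc _ ≤ Real.exp (γ ((k:ℤ)+2) - γ ((k:ℤ)+1)) * Real.exp (γ ((k:ℤ)+1)) :=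
                mul_le_mul_of_nonneg_left ih2 hc0.le
            _ = Real.exp (γ ((k:ℤ)+2)) := hc.symm
      have hfin : Real.exp (γ ((k:ℤ)+2)) * ψ ((k:ℤ)+1)
          - Real.exp (-γ ((k:ℤ)+1)) * ψ (k : ℤ) ≤ Real.exp (γ ((k:ℤ)+2)) := by
        rw [hWrec]
        nlinarith [mul_nonneg hpos.le hψk]
      have hcast : ((k+1:ℕ):ℤ) = (k:ℤ)+1 := by push_cast; ring
      rw [hcast, show ((k:ℤ)+1)-1 = (k:ℤ) from by ring,
        show ((k:ℤ)+1)+1 = (k:ℤ)+2 from by ring]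
      exact ⟨hψk, hstep, hfin⟩
  -- part 1
  have part1 : ∀ n : ℤ, 0 ≤ n → n ≤ N - 2 → ψ (n + 1) ≤ 1 + ψ n := by
    intro n hn hnN
    obtain ⟨k, rfl⟩ : ∃ k : ℕ, n = (k : ℤ) := ⟨n.toNat, (Int.toNat_of_nonneg hn).symm⟩
    obtain ⟨h0, h1, h2⟩ := key k (by omega)
    have hψk : 0 ≤ ψ (k : ℤ) := le_trans h0 h1
    have hrk := hrec k hn (by omega)
    have hg1 : 0 ≤ γ ((k : ℤ) + 1) := (hγ _ (by omega)).1
    have e1 : Real.exp (-2 * γ ((k : ℤ) + 1))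
        = Real.exp (-γ ((k : ℤ) + 1)) * Real.exp (-γ ((k : ℤ) + 1)) := by
      rw [← Real.exp_add]; ring_nf
    have e2 : Real.exp (-(γ (k : ℤ) + γ ((k : ℤ) + 1)))
        = Real.exp (-γ ((k : ℤ) + 1)) * Real.exp (-γ (k : ℤ)) := by
      rw [← Real.exp_add]; ring_nf
    have hle2 : Real.exp (-γ ((k : ℤ) + 1)) ≤ 1 := Real.exp_le_one_iff.mpr (by linarith)
    have hpos : (0 : ℝ) < Real.exp (-γ ((k : ℤ) + 1)) := Real.exp_pos _
    have hinv : Real.exp (-γ ((k:ℤ)+1)) * Real.exp (γ ((k:ℤ)+1)) = 1 := by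
      rw [← Real.exp_add]; simp
    have heeE : Real.exp (-γ ((k:ℤ)+1)) * Real.exp (-γ ((k:ℤ)+1))
        ≤ Real.exp (-γ ((k:ℤ)+1)) * Real.exp (γ ((k:ℤ)+1)) := by
      rw [hinv]; nlinarith
    rw [hrk, e1, e2]
    nlinarith [mul_le_mul_of_nonneg_left h2 hpos.le, hinv,
      mul_le_mul_of_nonneg_right heeE hψk]
  refine ⟨part1, ?_⟩
  have part2 : ∀ k : ℕ, (k : ℤ) ≤ N - 1 → ψ (k : ℤ) ≤ (k : ℤ) + 1 := by
    intro k
    induction k with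
    | zero => intro _; simp [hψ0]
    | succ k ih =>
      intro hk
      have hk' : (k : ℤ) ≤ N - 2 := by push_cast at hk ⊢; omega
      have h1 := part1 k (by positivity) hk'
      have h2 := ih (by omega)
      have hcast : ((k+1:ℕ):ℤ) = (k:ℤ)+1 := by push_cast; ring
      rw [hcast]
      push_cast at h2 ⊢
      linarith
  intro n hn hnN
  obtain ⟨k, rfl⟩ : ∃ k : ℕ, n = (k : ℤ) := ⟨n.toNat, (Int.toNat_of_nonneg hn).symm⟩
  exact part2 k (by omega)
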